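/- There exists a coloring c of the infinite Hex board that is a finite-boards win for Red but in which Red does not fulfill the standard winning condition; hence the finite-boards winning condition is strictly weaker than the standard winning condition. -/
import Mathlib


/-- Hex adjacency on the infinite board `ℤ × ℤ`: `p` and `q` are adjacent iff
`q - p ∈ {(1,0), (-1,0), (0,1), (0,-1), (1,1), (-1,-1)}`. -/
def HexAdj (p q : ℤ × ℤ) : Prop :=
  q - p ∈ ({(1, 0), (-1, 0), (0, 1), (0, -1), (1, 1), (-1, -1)} : Set (ℤ × ℤ))

/-- A red `ℤ`-chain of the coloring `c`. -/
def IsRedChain (c : ℤ × ℤ → Option Bool) (f : ℤ → ℤ × ℤ) : Prop :=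
  ∀ n : ℤ, HexAdj (f n) (f (n + 1)) ∧ c (f n) = some true

/-- A blue `ℤ`-chain of the coloring `c`. -/
def IsBlueChain (c : ℤ × ℤ → Option Bool) (f : ℤ → ℤ × ℤ) : Prop :=
  ∀ n : ℤ, HexAdj (f n) (f (n + 1)) ∧ c (f n) = some false

/-- The convergence requirement for a winning red chain: for every `(a,b)` the positive
end eventually has both coordinates `> a`, `> b`, and the negative end `< a`, `< b`. -/
def RedConverges (f : ℤ → ℤ × ℤ) : Prop :=
  ∀ a b : ℤ, ∃ N : ℕ, ∀ n : ℕ, N ≤ n →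
    a < (f n).1 ∧ b < (f n).2 ∧ (f (-(n : ℤ))).1 < a ∧ (f (-(n : ℤ))).2 < b

/-- The convergence requirement for a winning blue chain. -/
def BlueConverges (f : ℤ → ℤ × ℤ) : Prop :=
  ∀ a b : ℤ, ∃ N : ℕ, ∀ n : ℕ, N ≤ n →
    (f n).1 < a ∧ b < (f n).2 ∧ a < (f (-(n : ℤ))).1 ∧ (f (-(n : ℤ))).2 < b

/-- Red fulfills the standard winning condition in the coloring `c`. -/
def RedWinsStd (c : ℤ × ℤ → Option Bool) : Prop :=
  ∃ f : ℤ → ℤ × ℤ, IsRedChain c f ∧ RedConverges f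

/-- Blue fulfills the standard winning condition in the coloring `c`. -/
def BlueWinsStd (c : ℤ × ℤ → Option Bool) : Prop :=
  ∃ f : ℤ → ℤ × ℤ, IsBlueChain c f ∧ BlueConverges f

/-- Membership in the rhombus `R((a,b), n) = {(x,y) : |x - a| ≤ n ∧ |y - b| ≤ n}`. -/
def InRhombus (a b : ℤ) (n : ℕ) (q : ℤ × ℤ) : Prop :=
  |q.1 - a| ≤ (n : ℤ) ∧ |q.2 - b| ≤ (n : ℤ)

/-- Red wins on the rhombus `R((a,b), n)` under the coloring `c`: there is a finite
sequence of cells of the rhombus, consecutive ones adjacent, all colored `some true`,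
from a cell with first coordinate `a - n` to a cell with first coordinate `a + n`. -/
def RedWinsRhombus (c : ℤ × ℤ → Option Bool) (a b : ℤ) (n : ℕ) : Prop :=
  ∃ k : ℕ, ∃ f : Fin (k + 1) → ℤ × ℤ,
    (∀ i, InRhombus a b n (f i)) ∧
    (∀ i : Fin k, HexAdj (f i.castSucc) (f i.succ)) ∧
    (∀ i, c (f i) = some true) ∧
    (f 0).1 = a - (n : ℤ) ∧ (f (Fin.last k)).1 = a + (n : ℤ)

/-- Blue wins on the rhombus `R((a,b), n)` under the coloring `c`. -/
def BlueWinsRhombus (c : ℤ × ℤ → Option Bool) (a b : ℤ) (n : ℕ) : Prop :=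
  ∃ k : ℕ, ∃ f : Fin (k + 1) → ℤ × ℤ,
    (∀ i, InRhombus a b n (f i)) ∧
    (∀ i : Fin k, HexAdj (f i.castSucc) (f i.succ)) ∧
    (∀ i, c (f i) = some false) ∧
    (f 0).2 = b - (n : ℤ) ∧ (f (Fin.last k)).2 = b + (n : ℤ)

/-- `c` is a finite-boards win for Red: for every center, Red wins on all sufficiently
large rhombus boards with that center. -/
def FiniteBoardsWinRed (c : ℤ × ℤ → Option Bool) : Prop :=
  ∀ a b : ℤ, ∃ N : ℕ, 1 ≤ N ∧ ∀ n : ℕ, N ≤ n → RedWinsRhombus c a b n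

/-- `c` is a finite-boards win for Blue. -/
def FiniteBoardsWinBlue (c : ℤ × ℤ → Option Bool) : Prop :=
  ∀ a b : ℤ, ∃ N : ℕ, 1 ≤ N ∧ ∀ n : ℕ, N ≤ n → BlueWinsRhombus c a b n

/-- The finite-boards winning condition is strictly weaker than the standard winning
condition: there is a coloring that is a finite-boards win for Red but in which Red does
not fulfill the standard winning condition. -/
theorem finite_boards_win_strictly_weaker :
    ∃ c : ℤ × ℤ → Option Bool, FiniteBoardsWinRed c ∧ ¬ RedWinsStd c := by
  refine ⟨fun p => if p.2 = 0 then some true else none, ?_, ?_⟩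
  · intro a b
    refine ⟨max 1 b.natAbs, le_max_left _ _, ?_⟩
    intro n hn
    have hb : |b| ≤ (n : ℤ) := by
      have : b.natAbs ≤ n := le_trans (le_max_right 1 _) hn
      rw [Int.abs_eq_natAbs]; exact_mod_cast this
    refine ⟨2 * n, fun i => (a - n + i.val, 0), ?_, ?_, ?_, ?_, ?_⟩
    · intro i
      have hi : (i : ℕ) ≤ 2 * n := Nat.lt_succ_iff.mp i.isLt
      constructor
      · simp only
        rw [abs_le]
        constructor <;> [omega; omega]
      · simpa using hb
    · intro i
      show _ ∈ _
      left
      simp [Prod.ext_iff, Fin.coe_castSucc, Fin.val_succ]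
      all_goals (push_cast; ring)
    · intro i; simp
    · simp
    · simp [Fin.last]
      push_cast
      ring
  · rintro ⟨f, hchain, hconv⟩
    obtain ⟨N, hN⟩ := hconv 0 0
    have h2 := (hchain N).2
    have hz : (f (N : ℤ)).2 = 0 := by
      by_contra h
      simp [h] at h2
    have := (hN N le_rfl).2.1
    omega
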